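/- If G_n and F are distribution functions with finite first moments such that G_n → F uniformly on ℝ, G_n^{-1} → F^{-1} uniformly on every interval [δ, 1−δ] with 0 < δ < 1/2, and ∫|x| dG_n(x) → ∫|x| dF(x), then the Wasserstein-1 distance ∫₀¹ |G_n^{-1}(u) − F^{-1}(u)| du converges to 0. -/

import Mathlib

open Set Filter MeasureTheory

lemma quantile_monotoneOn_aux (F : ℝ → ℝ) (hF : Monotone F)
    (hbot : Tendsto F atBot (nhds 0)) (htop : Tendsto F atTop (nhds 1)) :
    MonotoneOn (fun u => sInf {y : ℝ | u ≤ F y}) (Set.Ioo (0:ℝ) 1) := by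
  intro u hu v hv huv
  have hne : {y : ℝ | v ≤ F y}.Nonempty := by
    have h1 : ∀ᶠ y in atTop, v < F y := htop.eventually (eventually_gt_nhds hv.2)
    obtain ⟨y, hy⟩ := h1.exists
    exact ⟨y, hy.le⟩
  have hbdd : BddBelow {y : ℝ | u ≤ F y} := by
    have h1 : ∀ᶠ y in atBot, F y < u := hbot.eventually (eventually_lt_nhds hu.1)
    obtain ⟨y0, hy0⟩ := h1.exists
    refine ⟨y0, fun y hy => ?_⟩
    by_contra h
    push_neg at h
    exact absurd (le_trans hy (hF h.le)) (not_le.2 hy0)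
  exact csInf_le_csInf hbdd hne (fun y hy => le_trans huv hy)


/-- If distribution functions `G_n` converge uniformly to `F`, their quantile functions converge
uniformly on every `[δ, 1-δ]`, and the first absolute moments converge (expressed via the
quantile representation `∫₀¹ |G_n⁻¹| → ∫₀¹ |F⁻¹|`), then the Wasserstein-1 distance
`∫₀¹ |G_n⁻¹(u) − F⁻¹(u)| du → 0`. -/
theorem wasserstein_convergence_of_uniform_and_moment
    (G : ℕ → ℝ → ℝ) (F : ℝ → ℝ)
    (hGmono : ∀ n, Monotone (G n)) (hGrc : ∀ n y, ContinuousWithinAt (G n) (Set.Ici y) y)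
    (hGbot : ∀ n, Tendsto (G n) atBot (nhds 0)) (hGtop : ∀ n, Tendsto (G n) atTop (nhds 1))
    (hFmono : Monotone F) (hFrc : ∀ y, ContinuousWithinAt F (Set.Ici y) y)
    (hFbot : Tendsto F atBot (nhds 0)) (hFtop : Tendsto F atTop (nhds 1))
    -- quantile functions
    (QG : ℕ → ℝ → ℝ) (QF : ℝ → ℝ)
    (hQG : ∀ n u, QG n u = sInf {y : ℝ | u ≤ G n y})
    (hQF : ∀ u, QF u = sInf {y : ℝ | u ≤ F y})
    -- finite first moments
    (hQGint : ∀ n, IntegrableOn (fun u => |QG n u|) (Set.Ioo (0:ℝ) 1))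
    (hQFint : IntegrableOn (fun u => |QF u|) (Set.Ioo (0:ℝ) 1))
    -- uniform convergence of the distribution functions
    (hunif : Tendsto (fun n => ⨆ y : ℝ, |G n y - F y|) atTop (nhds 0))
    -- uniform convergence of the quantile functions on [δ, 1-δ]
    (hqunif : ∀ δ : ℝ, 0 < δ → δ < 1/2 →
      Tendsto (fun n => ⨆ u : Set.Icc δ (1-δ), |QG n u - QF u|) atTop (nhds 0))
    -- convergence of first absolute moments
    (hmom : Tendsto (fun n => ∫ u in Set.Ioo (0:ℝ) 1, |QG n u|) atTop
      (nhds (∫ u in Set.Ioo (0:ℝ) 1, |QF u|))) :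
    Tendsto (fun n => ∫ u in Set.Ioo (0:ℝ) 1, |QG n u - QF u|) atTop (nhds 0) := by
  set I : Set ℝ := Set.Ioo (0:ℝ) 1 with hIdef
  have hImeas : MeasurableSet I := measurableSet_Ioo
  -- monotonicity of quantiles on I
  have hQGm : ∀ n, MonotoneOn (QG n) I := by
    intro n u hu v hv huv
    rw [hQG n u, hQG n v]
    exact quantile_monotoneOn_aux (G n) (hGmono n) (hGbot n) (hGtop n) hu hv huv
  have hQFm : MonotoneOn QF I := by
    intro u hu v hv huv
    rw [hQF u, hQF v]
    exact quantile_monotoneOn_aux F hFmono hFbot hFtop hu hv huv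
  have hQGam : ∀ n, AEMeasurable (QG n) (volume.restrict I) :=
    fun n => aemeasurable_restrict_of_monotoneOn hImeas (hQGm n)
  have hQFam : AEMeasurable QF (volume.restrict I) :=
    aemeasurable_restrict_of_monotoneOn hImeas hQFm
  -- integrability of the difference
  have hdiffint : ∀ n, IntegrableOn (fun u => |QG n u - QF u|) I := by
    intro n
    refine Integrable.mono' ((hQGint n).add hQFint) ?_ ?_
    · exact (((hQGam n).sub hQFam).aestronglyMeasurable).norm
    · filter_upwards with u
      simp only [Real.norm_eq_abs, abs_abs]
      exact abs_sub _ _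
  -- nonneg of integrals
  have hnn : ∀ n, 0 ≤ ∫ u in I, |QG n u - QF u| :=
    fun n => setIntegral_nonneg hImeas (fun u _ => abs_nonneg _)
  rw [NormedAddCommGroup.tendsto_nhds_zero]
  intro ε hε
  -- choose δ = 1/(k+3) with small tail integral of |QF|
  have hA : ∀ k : ℕ, Set.Icc ((1:ℝ)/(k+3)) (1 - 1/(k+3)) ⊆ I := by
    intro k x hx
    have h3 : (0:ℝ) < 1/((k:ℝ)+3) := by positivity
    exact ⟨by linarith [hx.1], by linarith [hx.2]⟩
  have hU : (⋃ k : ℕ, Set.Icc ((1:ℝ)/(k+3)) (1 - 1/(k+3))) = I := by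
    apply subset_antisymm
    · exact iUnion_subset hA
    · intro x hx
      obtain ⟨k, hk⟩ := exists_nat_one_div_lt (lt_min hx.1 (by linarith [hx.2] : (0:ℝ) < 1 - x))
      have hk3 : 1/((k:ℝ)+3) ≤ 1/((k:ℝ)+1) := by
        apply one_div_le_one_div_of_le <;> [positivity; linarith]
      have h1 : 1/((k:ℝ)+1) < x := lt_of_lt_of_le hk (min_le_left _ _)
      have h2 : 1/((k:ℝ)+1) < 1 - x := lt_of_lt_of_le hk (min_le_right _ _)
      exact mem_iUnion.2 ⟨k, by constructor <;> linarith⟩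
  have hmonoA : Monotone (fun k : ℕ => Set.Icc ((1:ℝ)/(k+3)) (1 - 1/(k+3))) := by
    intro k l hkl
    have h1 : 1/((l:ℝ)+3) ≤ 1/((k:ℝ)+3) := by
      apply one_div_le_one_div_of_le
      · positivity
      · have : (k:ℝ) ≤ l := Nat.cast_le.2 hkl
        linarith
    exact Set.Icc_subset_Icc h1 (by linarith)
  have htail : Tendsto (fun k : ℕ => ∫ u in Set.Icc ((1:ℝ)/(k+3)) (1 - 1/(k+3)), |QF u|)
      atTop (nhds (∫ u in I, |QF u|)) := by
    have := tendsto_setIntegral_of_monotone (μ := volume) (f := fun u => |QF u|)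
      (fun k : ℕ => measurableSet_Icc) hmonoA (by rw [hU]; exact hQFint)
    rwa [hU] at this
  have htail0 : Tendsto (fun k : ℕ => (∫ u in I, |QF u|) -
      ∫ u in Set.Icc ((1:ℝ)/(k+3)) (1 - 1/(k+3)), |QF u|) atTop (nhds 0) := by
    simpa using (tendsto_const_nhds (x := ∫ u in I, |QF u|)).sub htail
  obtain ⟨k, hk⟩ := (htail0.eventually_lt_const (by linarith : (0:ℝ) < ε/4)).exists
  set δ : ℝ := 1/((k:ℝ)+3) with hδdef
  have hδ0 : 0 < δ := by positivity
  have hδhalf : δ < 1/2 := by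
    rw [hδdef, div_lt_div_iff₀ (by positivity) (by norm_num)]
    have : (0:ℝ) ≤ (k:ℝ) := Nat.cast_nonneg k
    linarith
  set M : Set ℝ := Set.Icc δ (1-δ) with hMdef
  have hMI : M ⊆ I := hA k
  have hMmeas : MeasurableSet M := measurableSet_Icc
  have hδM : δ ∈ M := ⟨le_rfl, by linarith⟩
  have h1δM : (1-δ) ∈ M := ⟨by linarith, le_rfl⟩
  have htailδ : (∫ u in I, |QF u|) - ∫ u in M, |QF u| < ε/4 := hk
  -- the sup over M
  set s : ℕ → ℝ := fun n => ⨆ u : Set.Icc δ (1-δ), |QG n u - QF u| with hsdef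
  have hs : Tendsto s atTop (nhds 0) := hqunif δ hδ0 hδhalf
  -- boundedness on M of monotone functions
  have hbnd : ∀ f : ℝ → ℝ, MonotoneOn f I → ∀ u ∈ M, |f u| ≤ |f δ| + |f (1-δ)| := by
    intro f hf u hu
    have h1 : f δ ≤ f u := hf (hMI hδM) (hMI hu) hu.1
    have h2 : f u ≤ f (1-δ) := hf (hMI hu) (hMI h1δM) hu.2
    rw [abs_le]
    constructor
    · have := neg_abs_le (f δ); have := abs_nonneg (f (1-δ)); linarith
    · have := le_abs_self (f (1-δ)); have := abs_nonneg (f δ); linarith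
  have hbdd : ∀ n, BddAbove (Set.range fun u : Set.Icc δ (1-δ) => |QG n u - QF u|) := by
    intro n
    refine ⟨|QG n δ| + |QG n (1-δ)| + (|QF δ| + |QF (1-δ)|), ?_⟩
    rintro x ⟨⟨u, hu⟩, rfl⟩
    calc |QG n u - QF u| ≤ |QG n u| + |QF u| := abs_sub _ _
      _ ≤ _ := add_le_add (hbnd (QG n) (hQGm n) u hu) (hbnd QF hQFm u hu)
  have hptwise : ∀ n, ∀ u ∈ M, |QG n u - QF u| ≤ s n := by
    intro n u hu
    exact le_ciSup (hbdd n) ⟨u, hu⟩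
  have hs0 : ∀ n, 0 ≤ s n := fun n =>
    le_trans (abs_nonneg _) (hptwise n δ hδM)
  -- integral estimates
  have hconstM : ∀ c : ℝ, ∫ _ in M, c = (1 - 2*δ) * c := by
    intro c
    rw [setIntegral_const, hMdef, Measure.real, Real.volume_Icc, ENNReal.toReal_ofReal (by linarith), smul_eq_mul]
    ring_nf
  have e1 : ∀ n, ∫ u in M, |QG n u - QF u| ≤ s n := by
    intro n
    calc ∫ u in M, |QG n u - QF u| ≤ ∫ _ in M, s n := by
          refine setIntegral_mono_on ((hdiffint n).mono_set hMI)
            (integrableOn_const (by rw [hMdef, Real.volume_Icc]; exact ENNReal.ofReal_ne_top))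
            hMmeas (hptwise n)
      _ = (1 - 2*δ) * s n := hconstM _
      _ ≤ s n := by nlinarith [hs0 n]
  have e2 : ∀ n, ∫ u in M, |QF u| ≤ (∫ u in M, |QG n u|) + s n := by
    intro n
    have hint1 : IntegrableOn (fun u => |QG n u| + s n) M :=
      ((hQGint n).mono_set hMI).add
        (integrableOn_const (by rw [hMdef, Real.volume_Icc]; exact ENNReal.ofReal_ne_top))
    calc ∫ u in M, |QF u| ≤ ∫ u in M, (|QG n u| + s n) := by
          refine setIntegral_mono_on (hQFint.mono_set hMI) hint1 hMmeas ?_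
          intro u hu
          have h1 := hptwise n u hu
          have h2 : |QF u| ≤ |QG n u| + |QG n u - QF u| := by
            have := abs_sub_abs_le_abs_sub (QF u) (QG n u)
            have := abs_sub_comm (QF u) (QG n u)
            calc |QF u| ≤ |QG n u| + (|QF u| - |QG n u|) := by linarith
              _ ≤ |QG n u| + |QF u - QG n u| := by
                  have := le_abs_self (|QF u| - |QG n u|)
                  have := abs_sub_abs_le_abs_sub (QF u) (QG n u)
                  linarith
              _ = |QG n u| + |QG n u - QF u| := by rw [abs_sub_comm]
          linarith
      _ = (∫ u in M, |QG n u|) + ∫ _ in M, s n := by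
          rw [integral_add ((hQGint n).mono_set hMI)
            (integrableOn_const (by rw [hMdef, Real.volume_Icc]; exact ENNReal.ofReal_ne_top))]
      _ = (∫ u in M, |QG n u|) + (1 - 2*δ) * s n := by rw [hconstM]
      _ ≤ _ := by nlinarith [hs0 n]
  -- splitting lemma
  have hsplit : ∀ f : ℝ → ℝ, IntegrableOn f I →
      ∫ u in I, f u = (∫ u in M, f u) + ∫ u in I \ M, f u := by
    intro f hf
    rw [← setIntegral_union (Set.disjoint_sdiff_right) (hImeas.diff hMmeas)
      (hf.mono_set hMI) (hf.mono_set Set.diff_subset), Set.union_diff_cancel hMI]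
  -- tail bound
  have e3 : ∀ n, ∫ u in I \ M, |QG n u - QF u| ≤
      (∫ u in I \ M, |QG n u|) + ∫ u in I \ M, |QF u| := by
    intro n
    calc ∫ u in I \ M, |QG n u - QF u| ≤ ∫ u in I \ M, (|QG n u| + |QF u|) := by
          refine setIntegral_mono_on ((hdiffint n).mono_set Set.diff_subset)
            (((hQGint n).mono_set Set.diff_subset).add (hQFint.mono_set Set.diff_subset))
            (hImeas.diff hMmeas) (fun u _ => abs_sub _ _)
      _ = _ := integral_add ((hQGint n).mono_set Set.diff_subset)
            (hQFint.mono_set Set.diff_subset)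
  -- main estimate
  have main : ∀ n, ∫ u in I, |QG n u - QF u| ≤
      2 * s n + ((∫ u in I, |QG n u|) - ∫ u in I, |QF u|)
        + 2 * ((∫ u in I, |QF u|) - ∫ u in M, |QF u|) := by
    intro n
    have hsG := hsplit (fun u => |QG n u|) (hQGint n)
    have hsF := hsplit (fun u => |QF u|) hQFint
    have hsD := hsplit (fun u => |QG n u - QF u|) (hdiffint n)
    have h1 := e1 n
    have h2 := e2 n
    have h3 := e3 n
    linarith
  -- conclude
  have hev1 : ∀ᶠ n in atTop, s n < ε/8 := hs.eventually_lt_const (by linarith)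
  have hev2 : ∀ᶠ n in atTop,
      (∫ u in I, |QG n u|) - (∫ u in I, |QF u|) < ε/4 :=
    (hmom.sub_const _).eventually_lt_const (by linarith)
  filter_upwards [hev1, hev2] with n h1 h2
  have := main n
  have hnn' := hnn n
  rw [Real.norm_eq_abs, abs_of_nonneg hnn']
  linarith
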